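/- Let R be a finite commutative local ring of order q^n with q odd, R/J(R) of order q, and J(R)^{n-1} ≠ 0. Let k = 2l be even with 0 < k < n and suppose u ∈ J^k \ J^{k+1} is a square of an element of R. Then the set { v ∈ R : v^2 = u } has exactly 2q^l elements; moreover, each such v lies in J^l \ J^{l+1} and any two solutions v, v' satisfy v = ±v' + j for some j ∈ J^{n-l}. -/

import Mathlib

open IsLocalRing Submodule

section helpers
variable {R : Type*} [CommRing R] [IsLocalRing R]

lemma aux_span_card {M : Type*} [AddCommGroup M] [Module R M]
    {x : M} (hx : x ≠ 0) (htor : ∀ j ∈ maximalIdeal R, j • x = (0 : M)) :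
    Nat.card ↥(Submodule.span R {x}) = Nat.card (R ⧸ maximalIdeal R) := by
  have hker : LinearMap.ker (LinearMap.toSpanSingleton R M x) = maximalIdeal R := by
    apply le_antisymm
    · apply IsLocalRing.le_maximalIdeal
      intro htop
      have h1 : (1 : R) ∈ LinearMap.ker (LinearMap.toSpanSingleton R M x) := by
        rw [htop]; trivial
      rw [LinearMap.mem_ker, LinearMap.toSpanSingleton_apply, one_smul] at h1
      exact hx h1
    · intro j hj
      rw [LinearMap.mem_ker, LinearMap.toSpanSingleton_apply]
      exact htor j hj
  have h2 := Nat.card_congr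
    (LinearMap.quotKerEquivRange (LinearMap.toSpanSingleton R M x)).toEquiv
  rw [hker] at h2
  rw [LinearMap.span_singleton_eq_range]
  exact h2.symm

lemma aux_chain [Fintype R] (q n : ℕ) (hq2 : 2 ≤ q) (hn : 1 ≤ n)
    (hcard : Fintype.card R = q ^ n)
    (hres : Nat.card (R ⧸ maximalIdeal R) = q)
    (hJ : maximalIdeal R ^ (n - 1) ≠ ⊥) :
    (∀ i ≤ n, Nat.card (R ⧸ (maximalIdeal R ^ i : Ideal R)) = q ^ i) ∧
      (∀ i ≤ n, Nat.card ↥(maximalIdeal R ^ i : Ideal R) = q ^ (n - i)) ∧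
      maximalIdeal R ^ n = ⊥ := by
  set J := maximalIdeal R with hJdef
  have hcardR : Nat.card R = q ^ n := by rw [Nat.card_eq_fintype_card, hcard]
  -- nilpotency
  have hnilp : ∃ m, J ^ m = ⊥ := by
    obtain ⟨m, hm⟩ := IsArtinianRing.isNilpotent_jacobson_bot (R := R)
    refine ⟨m, ?_⟩
    rw [IsLocalRing.jacobson_eq_maximalIdeal ⊥ bot_ne_top] at hm
    simpa using hm
  -- strictness
  have hstrict : ∀ i < n, J ^ i ≠ J ^ (i + 1) := by
    intro i hi heq
    have hstep : ∀ t, J ^ i = J ^ (i + t) := by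
      intro t
      induction t with
      | zero => rfl
      | succ t ih =>
        have : J ^ (i + t + 1) = J ^ (i + t) * J := pow_succ _ _
        rw [show i + (t+1) = i + t + 1 by omega, this, ← ih, ← pow_succ, ← heq]
    obtain ⟨m, hm⟩ := hnilp
    have hbot : J ^ i = ⊥ := by
      have h1 : J ^ (i + m) ≤ J ^ m := Ideal.pow_le_pow_right (by omega)
      rw [← hstep m] at h1
      exact le_bot_iff.mp (h1.trans hm.le)
    have : J ^ (n - 1) ≤ J ^ i := Ideal.pow_le_pow_right (by omega)
    exact hJ (le_bot_iff.mp (hbot ▸ this))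
  -- step: card of quotient multiplies by q * f
  have estep : ∀ i < n, ∃ f, 1 ≤ f ∧
      Nat.card (R ⧸ (J ^ (i+1) : Ideal R)) = q * f * Nat.card (R ⧸ (J ^ i : Ideal R)) := by
    intro i hi
    have hTS : (J ^ (i+1) : Ideal R) ≤ J ^ i := Ideal.pow_le_pow_right (by omega)
    have key := Submodule.card_quotient_mul_card_quotient (J ^ i) (J ^ (i+1)) hTS
    set A := Submodule.map (J ^ (i+1) : Ideal R).mkQ (J ^ i : Ideal R) with hA
    obtain ⟨x, hxS, hxT⟩ := SetLike.exists_of_lt (lt_of_le_of_ne hTS (Ne.symm (hstrict i hi)))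
    set xb := (J ^ (i+1) : Ideal R).mkQ x with hxb
    have hxb0 : xb ≠ 0 := by
      intro h
      rw [hxb, Submodule.mkQ_apply, Submodule.Quotient.mk_eq_zero] at h
      exact hxT h
    have htor : ∀ j ∈ maximalIdeal R, j • xb = 0 := by
      intro j hj
      have hmem : j * x ∈ (J ^ (i+1) : Ideal R) := by
        rw [mul_comm, pow_succ]
        exact Ideal.mul_mem_mul hxS hj
      rw [hxb, ← map_smul, smul_eq_mul, Submodule.mkQ_apply,
        Submodule.Quotient.mk_eq_zero]
      exact hmem
    have hspan : Nat.card ↥(Submodule.span R {xb}) = q := by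
      rw [aux_span_card hxb0 htor, hres]
    have hle : Submodule.span R {xb} ≤ A :=
      Submodule.span_le.mpr (by
        simp only [Set.singleton_subset_iff]
        exact Submodule.mem_map_of_mem hxS)
    have hdvd : q ∣ Nat.card ↥A := by
      rw [← hspan]
      exact AddSubgroup.card_dvd_of_injective (Submodule.inclusion hle).toAddMonoidHom
        (Submodule.inclusion_injective hle)
    have hApos : 0 < Nat.card ↥A := Nat.card_pos
    obtain ⟨f, hf⟩ := hdvd
    have hf1 : 1 ≤ f := by
      rcases Nat.eq_zero_or_pos f with h0 | h1
      · subst h0; rw [mul_zero] at hf; omega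
      · exact h1
    exact ⟨f, hf1, by rw [← key, hf]⟩
  -- lower bound q^i ≤ c_i
  have lower : ∀ i ≤ n, q ^ i ≤ Nat.card (R ⧸ (J ^ i : Ideal R)) := by
    intro i
    induction i with
    | zero => intro _; simpa using Nat.card_pos
    | succ i ih =>
      intro hi
      obtain ⟨f, hf1, hf⟩ := estep i (by omega)
      calc q ^ (i+1) = q * q ^ i := by ring
        _ ≤ q * Nat.card (R ⧸ (J ^ i : Ideal R)) :=
            Nat.mul_le_mul_left _ (ih (by omega))
        _ ≤ q * f * Nat.card (R ⧸ (J ^ i : Ideal R)) := by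
            have := Nat.card_pos (α := R ⧸ (J ^ i : Ideal R))
            nlinarith
        _ = Nat.card (R ⧸ (J ^ (i+1) : Ideal R)) := hf.symm
  -- chain bound
  have chain : ∀ j i, i + j ≤ n →
      q ^ j * Nat.card (R ⧸ (J ^ i : Ideal R)) ≤ Nat.card (R ⧸ (J ^ (i + j) : Ideal R)) := by
    intro j
    induction j with
    | zero => intro i _; simpa using le_refl _
    | succ j ih =>
      intro i hij
      obtain ⟨f, hf1, hf⟩ := estep (i + j) (by omega)
      calc q ^ (j+1) * Nat.card (R ⧸ (J ^ i : Ideal R))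
          = q * (q ^ j * Nat.card (R ⧸ (J ^ i : Ideal R))) := by ring
        _ ≤ q * Nat.card (R ⧸ (J ^ (i + j) : Ideal R)) :=
            Nat.mul_le_mul_left _ (ih i (by omega))
        _ ≤ q * f * Nat.card (R ⧸ (J ^ (i + j) : Ideal R)) := by
            have := Nat.card_pos (α := R ⧸ (J ^ (i+j) : Ideal R))
            nlinarith
        _ = Nat.card (R ⧸ (J ^ (i + j + 1) : Ideal R)) := hf.symm
        _ = Nat.card (R ⧸ (J ^ (i + (j + 1)) : Ideal R)) := by rw [show i + j + 1 = i + (j+1) by omega]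
  -- total card relation
  have total : ∀ i, Nat.card ↥(J ^ i : Ideal R) * Nat.card (R ⧸ (J ^ i : Ideal R)) = q ^ n := by
    intro i
    rw [← hcardR]
    exact (Submodule.card_eq_card_quotient_mul_card (J ^ i : Ideal R)).symm
  have hcn : Nat.card (R ⧸ (J ^ n : Ideal R)) = q ^ n := by
    have hdvd : Nat.card (R ⧸ (J ^ n : Ideal R)) ∣ q ^ n := Dvd.intro_left _ (total n)
    exact Nat.le_antisymm (Nat.le_of_dvd (by positivity) hdvd) (lower n le_rfl)
  have hquot : ∀ i ≤ n, Nat.card (R ⧸ (J ^ i : Ideal R)) = q ^ i := by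
    intro i hi
    refine Nat.le_antisymm ?_ (lower i hi)
    have h1 := chain (n - i) i (by omega)
    rw [show i + (n - i) = n by omega, hcn] at h1
    have h2 : q ^ n = q ^ (n - i) * q ^ i := by
      rw [← pow_add]; congr 1; omega
    rw [h2] at h1
    exact Nat.le_of_mul_le_mul_left h1 (by positivity)
  have hpow : ∀ i ≤ n, Nat.card ↥(J ^ i : Ideal R) = q ^ (n - i) := by
    intro i hi
    have h1 := total i
    rw [hquot i hi] at h1
    have h2 : q ^ n = q ^ (n - i) * q ^ i := by
      rw [← pow_add]; congr 1; omega
    rw [h2] at h1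
    exact Nat.eq_of_mul_eq_mul_right (by positivity) h1
  refine ⟨hquot, hpow, ?_⟩
  have h1 : Nat.card ↥(J ^ n : Ideal R) = 1 := by
    have := hpow n le_rfl
    simpa using this
  have hsub : Subsingleton ↥(J ^ n : Ideal R) :=
    (Nat.card_eq_one_iff_unique.mp h1).1
  rw [Submodule.eq_bot_iff]
  intro x hx
  have : (⟨x, hx⟩ : ↥(J ^ n : Ideal R)) = ⟨0, Submodule.zero_mem _⟩ := Subsingleton.elim _ _
  exact congrArg Subtype.val this

lemma aux_span_eq [Fintype R] (q n a : ℕ) (hq2 : 2 ≤ q) (han : a < n)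
    (hres : Nat.card (R ⧸ maximalIdeal R) = q)
    (hquot : ∀ i ≤ n, Nat.card (R ⧸ (maximalIdeal R ^ i : Ideal R)) = q ^ i)
    (hbot : maximalIdeal R ^ n = ⊥)
    {x : R} (hx : x ∈ maximalIdeal R ^ a) (hx' : x ∉ maximalIdeal R ^ (a + 1)) :
    Ideal.span {x} = maximalIdeal R ^ a := by
  set J := maximalIdeal R with hJdef
  have hTS : (J ^ (a+1) : Ideal R) ≤ J ^ a := Ideal.pow_le_pow_right (by omega)
  set A := Submodule.map (J ^ (a+1) : Ideal R).mkQ (J ^ a : Ideal R) with hA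
  set xb := (J ^ (a+1) : Ideal R).mkQ x with hxb
  have hxb0 : xb ≠ 0 := by
    intro h
    rw [hxb, Submodule.mkQ_apply, Submodule.Quotient.mk_eq_zero] at h
    exact hx' h
  have htor : ∀ j ∈ maximalIdeal R, j • xb = 0 := by
    intro j hj
    have hmem : j * x ∈ (J ^ (a+1) : Ideal R) := by
      rw [mul_comm, pow_succ]
      exact Ideal.mul_mem_mul hx hj
    rw [hxb, ← map_smul, smul_eq_mul, Submodule.mkQ_apply, Submodule.Quotient.mk_eq_zero]
    exact hmem
  have hspan : Nat.card ↥(Submodule.span R {xb}) = q := by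
    rw [aux_span_card hxb0 htor, hres]
  have hle : Submodule.span R {xb} ≤ A :=
    Submodule.span_le.mpr (by
      simp only [Set.singleton_subset_iff]
      exact Submodule.mem_map_of_mem hx)
  have key := Submodule.card_quotient_mul_card_quotient (J ^ a) (J ^ (a+1)) hTS
  rw [hquot a (by omega), hquot (a+1) (by omega)] at key
  have hcardA : Nat.card ↥A = q := by
    have : Nat.card ↥A * q ^ a = q * q ^ a := by rw [key, pow_succ, mul_comm q _]
    exact Nat.eq_of_mul_eq_mul_right (by positivity) this
  -- span = A by cardinality
  have hspanA : Submodule.span R {xb} = A := by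
    apply SetLike.coe_injective
    apply Set.eq_of_subset_of_ncard_le hle ?_ (Set.toFinite _)
    rw [← Nat.card_coe_set_eq, ← Nat.card_coe_set_eq]
    exact le_of_eq (hcardA.trans hspan.symm)
  -- step 1 : J^a ≤ span{x} ⊔ J^(a+1)
  have step1 : (J ^ a : Ideal R) ≤ Ideal.span {x} ⊔ J ^ (a + 1) := by
    intro y hy
    have hyA : (J ^ (a+1) : Ideal R).mkQ y ∈ A := Submodule.mem_map_of_mem hy
    rw [← hspanA, Submodule.mem_span_singleton] at hyA
    obtain ⟨r, hr⟩ := hyA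
    have hsub : y - r * x ∈ (J ^ (a+1) : Ideal R) := by
      rw [← Submodule.Quotient.mk_eq_zero]
      have : (J ^ (a+1) : Ideal R).mkQ (y - r * x) = 0 := by
        rw [map_sub, ← hr, hxb, ← map_smul, smul_eq_mul, sub_self]
      simpa [Submodule.mkQ_apply] using this
    have hrx : r * x ∈ Ideal.span {x} := by
      rw [Ideal.mem_span_singleton]
      exact Dvd.intro_left r rfl
    have := Submodule.add_mem_sup hrx hsub
    simpa using this
  -- iterate
  have iter : ∀ t, (J ^ a : Ideal R) ≤ Ideal.span {x} ⊔ J ^ (a + t) := by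
    intro t
    induction t with
    | zero => simpa using le_sup_right.trans (le_refl _)
    | succ t ih =>
      have hmulstep : (J ^ (a + t) : Ideal R) ≤ Ideal.span {x} ⊔ J ^ (a + t + 1) := by
        have h1 : (J ^ (a + t) : Ideal R) = J ^ a * J ^ t := by rw [← pow_add]
        have h2 : (J ^ a : Ideal R) * J ^ t ≤ (Ideal.span {x} ⊔ J ^ (a+1)) * J ^ t :=
          Ideal.mul_mono_left step1
        have h3 : (Ideal.span {x} ⊔ (J ^ (a+1) : Ideal R)) * J ^ t
            = Ideal.span {x} * J ^ t ⊔ J ^ (a+1) * J ^ t := Ideal.sup_mul _ _ _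
        have h4 : Ideal.span {x} * (J ^ t : Ideal R) ≤ Ideal.span {x} := Ideal.mul_le_left
        have h5 : (J ^ (a+1) : Ideal R) * J ^ t = J ^ (a + t + 1) := by
          rw [← pow_add]; congr 1; omega
        calc (J ^ (a + t) : Ideal R) = J ^ a * J ^ t := h1
          _ ≤ (Ideal.span {x} ⊔ J ^ (a+1)) * J ^ t := h2
          _ = Ideal.span {x} * J ^ t ⊔ J ^ (a+1) * J ^ t := h3
          _ ≤ Ideal.span {x} ⊔ J ^ (a + t + 1) := sup_le_sup h4 h5.le
      calc (J ^ a : Ideal R) ≤ Ideal.span {x} ⊔ J ^ (a + t) := ih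
        _ ≤ Ideal.span {x} ⊔ (Ideal.span {x} ⊔ J ^ (a + t + 1)) := sup_le_sup_left hmulstep _
        _ = Ideal.span {x} ⊔ J ^ (a + t + 1) := by rw [← sup_assoc, sup_idem]
        _ = Ideal.span {x} ⊔ J ^ (a + (t + 1)) := by rw [show a + t + 1 = a + (t+1) by omega]
  have final := iter (n - a)
  rw [show a + (n - a) = n by omega, hbot, sup_bot_eq] at final
  exact le_antisymm (Ideal.span_le.mpr (by simpa using hx)) final

end helpers

theorem sqrt_set_in_radical_power {R : Type*} [CommRing R] [Fintype R] [IsLocalRing R]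
    (q n l : ℕ) (hq : Odd q) (hk0 : 0 < 2 * l) (hkn : 2 * l < n)
    (hcard : Fintype.card R = q ^ n)
    (hres : Nat.card (R ⧸ (⊥ : Ideal R).jacobson) = q)
    (hJ : ((⊥ : Ideal R).jacobson) ^ (n - 1) ≠ ⊥)
    (u : R) (hu : u ∈ ((⊥ : Ideal R).jacobson) ^ (2 * l))
    (hu' : u ∉ ((⊥ : Ideal R).jacobson) ^ (2 * l + 1))
    (hsq : ∃ s : R, s ^ 2 = u) :
    {v : R | v ^ 2 = u}.ncard = 2 * q ^ l ∧
    (∀ v : R, v ^ 2 = u →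
      v ∈ ((⊥ : Ideal R).jacobson) ^ l ∧ v ∉ ((⊥ : Ideal R).jacobson) ^ (l + 1)) ∧
    (∀ v v' : R, v ^ 2 = u → v' ^ 2 = u →
      ∃ j ∈ ((⊥ : Ideal R).jacobson) ^ (n - l), v = v' + j ∨ v = -v' + j) := by
  classical
  have hJac : (⊥ : Ideal R).jacobson = maximalIdeal R :=
    IsLocalRing.jacobson_eq_maximalIdeal ⊥ bot_ne_top
  rw [hJac] at hres hJ hu hu' ⊢
  set J := maximalIdeal R with hJdef
  have hn1 : 1 ≤ n := by omega
  have hq2 : 2 ≤ q := by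
    haveI : Nontrivial (R ⧸ (J : Ideal R)) :=
      Ideal.Quotient.nontrivial_iff.mpr (Ideal.IsMaximal.ne_top (IsLocalRing.maximalIdeal.isMaximal R))
    rw [← hres]
    exact Finite.one_lt_card_iff_nontrivial.mpr this
  obtain ⟨hquot, hpow, hbot⟩ := aux_chain q n hq2 hn1 hcard hres hJ
  have hle_pow : ∀ {a b : ℕ}, b ≤ a → (J ^ a : Ideal R) ≤ J ^ b :=
    fun h => Ideal.pow_le_pow_right h
  have hord_le : ∀ a b, a ≤ n → b ≤ n → (J ^ a : Ideal R) ≤ J ^ b → b ≤ a := by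
    intro a b ha hb h
    have hle : Nat.card ↥(J ^ a : Ideal R) ≤ Nat.card ↥(J ^ b : Ideal R) :=
      Nat.card_le_card_of_injective (Submodule.inclusion h) (Submodule.inclusion_injective h)
    rw [hpow a ha, hpow b hb] at hle
    have := (Nat.pow_le_pow_iff_right (by omega : 1 < q)).mp hle
    omega
  have hordE : ∀ y : R, y ≠ 0 → ∃ b, b < n ∧ y ∈ (J ^ b : Ideal R) ∧ y ∉ (J ^ (b+1) : Ideal R) := by
    intro y hy
    have hyn : y ∉ (J ^ n : Ideal R) := by rw [hbot]; simpa using hy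
    have hex : ∃ i, y ∉ (J ^ i : Ideal R) := ⟨n, hyn⟩
    have hm_spec : y ∉ (J ^ (Nat.find hex) : Ideal R) := Nat.find_spec hex
    have hm_le : Nat.find hex ≤ n := Nat.find_le hyn
    have hm_pos : 0 < Nat.find hex := by
      rcases Nat.eq_zero_or_pos (Nat.find hex) with h0 | h
      · exfalso
        apply hm_spec
        rw [h0, pow_zero, Ideal.one_eq_top]
        exact Submodule.mem_top
      · exact h
    refine ⟨Nat.find hex - 1, by omega, ?_, ?_⟩
    · by_contra h
      exact Nat.find_min hex (by omega : Nat.find hex - 1 < Nat.find hex) h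
    · rw [show Nat.find hex - 1 + 1 = Nat.find hex by omega]
      exact hm_spec
  have hG : ∀ (x y : R) (a b : ℕ), a < n → b < n →
      x ∈ (J ^ a : Ideal R) → x ∉ (J ^ (a+1) : Ideal R) →
      y ∈ (J ^ b : Ideal R) → y ∉ (J ^ (b+1) : Ideal R) →
      (n ≤ a + b → x * y = 0) ∧
        (a + b < n → x * y ∈ (J ^ (a+b) : Ideal R) ∧ x * y ∉ (J ^ (a+b+1) : Ideal R)) := by
    intro x y a b ha hb hxa hxa' hyb hyb'
    have hxs : Ideal.span {x} = J ^ a := aux_span_eq q n a hq2 ha hres hquot hbot hxa hxa'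
    have hys : Ideal.span {y} = J ^ b := aux_span_eq q n b hq2 hb hres hquot hbot hyb hyb'
    have hxy : Ideal.span {x * y} = (J : Ideal R) ^ (a + b) := by
      rw [← Ideal.span_singleton_mul_span_singleton, hxs, hys, ← pow_add]
    constructor
    · intro hn'
      have hle : (J : Ideal R) ^ (a+b) ≤ J ^ n := hle_pow hn'
      have hmem : x * y ∈ Ideal.span {x * y} := Ideal.mem_span_singleton_self _
      rw [hxy] at hmem
      have := hle hmem
      rw [hbot] at this
      simpa using this
    · intro hn'
      constructor
      · have hmem : x * y ∈ Ideal.span {x * y} := Ideal.mem_span_singleton_self _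
        rwa [hxy] at hmem
      · intro hmem
        have hle2 : (J : Ideal R) ^ (a+b) ≤ J ^ (a+b+1) := by
          rw [← hxy]
          exact Ideal.span_le.mpr (by simpa using hmem)
        have := hord_le (a+b) (a+b+1) (by omega) (by omega) hle2
        omega
  have horder : ∀ v : R, v ^ 2 = u → v ∈ (J ^ l : Ideal R) ∧ v ∉ (J ^ (l+1) : Ideal R) := by
    intro v hv
    have hv0 : v ≠ 0 := by
      rintro rfl
      apply hu'
      rw [← hv]
      simp
    obtain ⟨b, hbn, hvb, hvb'⟩ := hordE v hv0
    have hGv := hG v v b b hbn hbn hvb hvb' hvb hvb'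
    have hbb : b + b < n := by
      by_contra h
      have h0 := hGv.1 (by omega)
      apply hu'
      rw [← hv, pow_two, h0]
      exact Submodule.zero_mem _
    obtain ⟨hm1, hm2⟩ := hGv.2 hbb
    rw [← pow_two] at hm1 hm2
    rw [hv] at hm1 hm2
    have h1 : ¬ (b + b + 1 ≤ 2 * l) := fun h => hm2 (hle_pow h hu)
    have h2 : ¬ (2 * l + 1 ≤ b + b) := fun h => hu' (hle_pow h hm1)
    have hbl : b = l := by omega
    exact ⟨hbl ▸ hvb, hbl ▸ hvb'⟩
  obtain ⟨s, hs⟩ := hsq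
  have hsord := horder s hs
  have hln : l < n := by omega
  have hJnl : (J ^ (n-l) : Ideal R) ≤ J ^ (l+1) := hle_pow (by omega)
  have hprod0 : ∀ y ∈ (J ^ l : Ideal R), ∀ j ∈ (J ^ (n-l) : Ideal R), y * j = 0 := by
    intro y hy j hj
    have h1 : y * j ∈ (J ^ l : Ideal R) * J ^ (n-l) := Ideal.mul_mem_mul hy hj
    rw [← pow_add] at h1
    have h2 : (J : Ideal R) ^ (l + (n-l)) ≤ J ^ n := hle_pow (by omega)
    have := h2 h1
    rw [hbot] at this
    simpa using this
  have hprodj : ∀ j ∈ (J ^ (n-l) : Ideal R), ∀ j' ∈ (J ^ (n-l) : Ideal R), j * j' = 0 := by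
    intro j hj j' hj'
    have h1 : j * j' ∈ (J ^ (n-l) : Ideal R) * J ^ (n-l) := Ideal.mul_mem_mul hj hj'
    rw [← pow_add] at h1
    have h2 : (J : Ideal R) ^ ((n-l) + (n-l)) ≤ J ^ n := hle_pow (by omega)
    have := h2 h1
    rw [hbot] at this
    simpa using this
  have h2u : ∃ w : R, 2 * w = 1 := by
    have hodd : Odd (Fintype.card R) := by rw [hcard]; exact hq.pow
    obtain ⟨t, ht⟩ := hodd
    have hzero : ((2 * t + 1 : ℕ) : R) = 0 := by
      rw [← ht]
      exact Nat.cast_card_eq_zero R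
    refine ⟨((t + 1 : ℕ) : R), ?_⟩
    push_cast at hzero ⊢
    linear_combination hzero
  obtain ⟨w, hw⟩ := h2u
  have hcancel2 : ∀ (I : Ideal R) (v : R), 2 * v ∈ I → v ∈ I := by
    intro I v h
    have := I.mul_mem_left w h
    rwa [show w * (2 * v) = 2 * w * v by ring, hw, one_mul] at this
  have hconv : ∀ j ∈ (J ^ (n-l) : Ideal R), (s + j) ^ 2 = u ∧ (-s + j) ^ 2 = u := by
    intro j hj
    have hsj : s * j = 0 := hprod0 s hsord.1 j hj
    have hjj : j * j = 0 := hprodj j hj j hj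
    constructor
    · have h1 : (s + j) ^ 2 = s ^ 2 + 2 * (s * j) + j * j := by ring
      rw [h1, hsj, hjj, hs]; ring
    · have h1 : (-s + j) ^ 2 = s ^ 2 - 2 * (s * j) + j * j := by ring
      rw [h1, hsj, hjj, hs]; ring
  have hkey : ∀ x y : R, x ∈ (J ^ l : Ideal R) → x ∉ (J ^ (l+1) : Ideal R) → x * y = 0 →
      y ∈ (J ^ (n-l) : Ideal R) := by
    intro x y hxl hxl' hxy
    rcases eq_or_ne y 0 with rfl | hy0
    · exact Submodule.zero_mem _
    obtain ⟨b, hbn, hyb, hyb'⟩ := hordE y hy0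
    have hGxy := hG x y l b hln hbn hxl hxl' hyb hyb'
    rcases lt_or_ge (l + b) n with hlt | hge
    · exfalso
      have := (hGxy.2 hlt).2
      rw [hxy] at this
      exact this (Submodule.zero_mem _)
    · exact hle_pow (by omega) hyb
  have hsol : ∀ v : R, v ^ 2 = u →
      (v - s ∈ (J ^ (n-l) : Ideal R) ∨ v + s ∈ (J ^ (n-l) : Ideal R)) := by
    intro v hv
    have hvord := horder v hv
    have h0 : (v - s) * (v + s) = 0 := by
      have h1 : (v - s) * (v + s) = v ^ 2 - s ^ 2 := by ring
      rw [h1, hv, hs, sub_self]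
    have hboth : v - s ∈ (J ^ l : Ideal R) := Submodule.sub_mem _ hvord.1 hsord.1
    have hboth' : v + s ∈ (J ^ l : Ideal R) := Submodule.add_mem _ hvord.1 hsord.1
    have hnotboth : v - s ∉ (J ^ (l+1) : Ideal R) ∨ v + s ∉ (J ^ (l+1) : Ideal R) := by
      by_contra h
      push_neg at h
      have h2v : 2 * v ∈ (J ^ (l+1) : Ideal R) := by
        have := Submodule.add_mem _ h.1 h.2
        rwa [show v - s + (v + s) = 2 * v by ring] at this
      exact hvord.2 (hcancel2 _ v h2v)
    rcases hnotboth with h | h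
    · right; exact hkey (v - s) (v + s) hboth h h0
    · left; exact hkey (v + s) (v - s) hboth' h (by rw [mul_comm]; exact h0)
  have hset : {v : R | v ^ 2 = u} =
      ((fun j => s + j) '' ((J ^ (n-l) : Ideal R) : Set R)) ∪
        ((fun j => -s + j) '' ((J ^ (n-l) : Ideal R) : Set R)) := by
    ext v
    simp only [Set.mem_setOf_eq, Set.mem_union, Set.mem_image, SetLike.mem_coe]
    constructor
    · intro hv
      rcases hsol v hv with h | h
      · left; exact ⟨v - s, h, by ring⟩
      · right; exact ⟨v + s, h, by ring⟩
    · rintro (⟨j, hj, rfl⟩ | ⟨j, hj, rfl⟩)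
      · exact (hconv j hj).1
      · exact (hconv j hj).2
  refine ⟨?_, fun v hv => horder v hv, ?_⟩
  · rw [hset]
    have hinj1 : Function.Injective (fun j : R => s + j) := fun a b h => by simpa using h
    have hinj2 : Function.Injective (fun j : R => -s + j) := fun a b h => by simpa using h
    have hdisj : Disjoint ((fun j => s + j) '' ((J ^ (n-l) : Ideal R) : Set R))
        ((fun j => -s + j) '' ((J ^ (n-l) : Ideal R) : Set R)) := by
      rw [Set.disjoint_left]
      rintro x ⟨j, hj, rfl⟩ ⟨j', hj', heq⟩
      have h2s : 2 * s ∈ (J ^ (n-l) : Ideal R) := by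
        have heq2 : (2 : R) * s = j' - j := by
          have h3 : -s + j' = s + j := heq
          linear_combination -h3
        rw [heq2]
        exact Submodule.sub_mem _ hj' hj
      exact hsord.2 (hcancel2 _ s (hJnl h2s))
    rw [Set.ncard_union_eq hdisj (Set.Finite.image _ (Set.toFinite _))
      (Set.Finite.image _ (Set.toFinite _))]
    rw [Set.ncard_image_of_injective _ hinj1, Set.ncard_image_of_injective _ hinj2]
    have hX : ((J ^ (n-l) : Ideal R) : Set R).ncard = q ^ l := by
      rw [← Nat.card_coe_set_eq]
      have h1 := hpow (n-l) (by omega)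
      rw [show n - (n - l) = l by omega] at h1
      exact h1
    rw [hX]
    ring
  · intro v v' hv hv'
    rcases hsol v hv with h1 | h1 <;> rcases hsol v' hv' with h2 | h2
    · refine ⟨v - v', ?_, Or.inl (by ring)⟩
      have := Submodule.sub_mem _ h1 h2
      rwa [show v - s - (v' - s) = v - v' by ring] at this
    · refine ⟨v + v', ?_, Or.inr (by ring)⟩
      have := Submodule.add_mem _ h1 h2
      rwa [show v - s + (v' + s) = v + v' by ring] at this
    · refine ⟨v + v', ?_, Or.inr (by ring)⟩
      have := Submodule.add_mem _ h1 h2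
      rwa [show v + s + (v' - s) = v + v' by ring] at this
    · refine ⟨v - v', ?_, Or.inl (by ring)⟩
      have := Submodule.sub_mem _ h1 h2
      rwa [show v + s - (v' + s) = v - v' by ring] at this
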